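/- (Theorem 4.1, sufficient condition for an isolated local minimizer.) Let x̄ be a feasible point of problem (P). Suppose the functions g_i, i ∈ I(x̄), are Hadamard differentiable at x̄ with respect to X in every direction, and that there exist γ > 0 and multipliers λ = (λ_0, λ_1, …, λ_p) ∈ [0,∞)^{p+1} such that λ_0 ∂⁻F(·,γ)(x̄;u;X) + Σ_{i=1}^p λ_i (g_i)'_H(x̄;u;X) > 0 for every direction u ∈ ℝ^l with u ≠ 0. Then x̄ is an isolated local minimizer of problem (P). -/

import Mathlib

open Filter Topology

noncomputable section

/-- The lower Hadamard directional derivative of `f` at `x` in direction `u` with respect to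
the set `S`, as an extended real number.  It is the `liminf` of the difference quotients
`(f (x + t • u') - f x) / t` as `(t, u') → (0⁺, u)` subject to `x + t • u' ∈ S`.
When `u` is not in the Bouligand tangent cone of `S` at `x` the restricting filter is the
bottom filter, and the `liminf` is `+∞`, in accordance with the convention
`∂⁻f(x;u;S) = +∞` for `u ∉ T(S,x)`. -/
def lowerHadamardDeriv {l : ℕ} (f : EuclideanSpace ℝ (Fin l) → ℝ) (S : Set (EuclideanSpace ℝ (Fin l)))
    (x u : EuclideanSpace ℝ (Fin l)) : EReal :=
  Filter.liminf
    (fun p : ℝ × EuclideanSpace ℝ (Fin l) => (((f (x + p.1 • p.2) - f x) / p.1 : ℝ) : EReal))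
    ((nhdsWithin (0 : ℝ) (Set.Ioi 0) ×ˢ nhds u) ⊓
      Filter.principal {p : ℝ × EuclideanSpace ℝ (Fin l) | x + p.1 • p.2 ∈ S})

/-- `f` is Hadamard differentiable at `x` in direction `u` with respect to `S`, with
(extended real) derivative `d`: the full limit of the difference quotients
`(f (x + t • u') - f x) / t` as `(t, u') → (0⁺, u)` subject to `x + t • u' ∈ S` exists
and equals `d`. -/
def HasHadamardDerivAt {l : ℕ} (f : EuclideanSpace ℝ (Fin l) → ℝ) (S : Set (EuclideanSpace ℝ (Fin l)))
    (x u : EuclideanSpace ℝ (Fin l)) (d : EReal) : Prop :=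
  Filter.Tendsto
    (fun p : ℝ × EuclideanSpace ℝ (Fin l) => (((f (x + p.1 • p.2) - f x) / p.1 : ℝ) : EReal))
    ((nhdsWithin (0 : ℝ) (Set.Ioi 0) ×ˢ nhds u) ⊓
      Filter.principal {p : ℝ × EuclideanSpace ℝ (Fin l) | x + p.1 • p.2 ∈ S})
    (nhds d)

/-- The Bouligand tangent cone (contingent cone) of `S` at `x`. -/
def bouligandCone {l : ℕ} (S : Set (EuclideanSpace ℝ (Fin l))) (x : EuclideanSpace ℝ (Fin l)) : Set (EuclideanSpace ℝ (Fin l)) :=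
  {u | ∃ (t : ℕ → ℝ) (v : ℕ → EuclideanSpace ℝ (Fin l)),
    (∀ k, 0 < t k) ∧ Filter.Tendsto t Filter.atTop (nhds 0) ∧
    Filter.Tendsto v Filter.atTop (nhds u) ∧ ∀ k, x + t k • v k ∈ S}

/-- `h := h₁² + ⋯ + h_q²`. -/
def hsum {l q : ℕ} (hf : Fin q → EuclideanSpace ℝ (Fin l) → ℝ) (x : EuclideanSpace ℝ (Fin l)) : ℝ :=
  ∑ j, (hf j x) ^ 2

/-- `G := {x ∈ X : gᵢ(x) ≤ 0, i = 1,…,m}`. -/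
def Gset {l m : ℕ} (X : Set (EuclideanSpace ℝ (Fin l))) (g : Fin m → EuclideanSpace ℝ (Fin l) → ℝ) : Set (EuclideanSpace ℝ (Fin l)) :=
  {x ∈ X | ∀ i, g i x ≤ 0}

/-- The feasible set `S := {x ∈ G : h(x) = 0}` of problem (P). -/
def Sset {l m q : ℕ} (X : Set (EuclideanSpace ℝ (Fin l))) (g : Fin m → EuclideanSpace ℝ (Fin l) → ℝ)
    (hf : Fin q → EuclideanSpace ℝ (Fin l) → ℝ) : Set (EuclideanSpace ℝ (Fin l)) :=
  {x ∈ Gset X g | hsum hf x = 0}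

/-- The penalty function `F(x,γ) := f(x) + γ h(x) + ½‖x - xbar‖²`. -/
def Fpen {l q : ℕ} (f : EuclideanSpace ℝ (Fin l) → ℝ) (hf : Fin q → EuclideanSpace ℝ (Fin l) → ℝ)
    (xbar : EuclideanSpace ℝ (Fin l)) (γ : ℝ) (x : EuclideanSpace ℝ (Fin l)) : ℝ :=
  f x + γ * hsum hf x + (1 / 2) * ‖x - xbar‖ ^ 2


/-- A nonnegative real coefficient times a nonpositive extended real is nonpositive. -/
lemma coe_mul_nonpos_aux {c : ℝ} (hc : 0 ≤ c) {b : EReal} (hb : b ≤ 0) : (c : EReal) * b ≤ 0 := by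
  rcases eq_or_lt_of_le hc with h | h
  · simp [← h]
  · induction b with
    | bot =>
        rw [EReal.mul_bot_of_pos (by exact_mod_cast h)]
        exact bot_le
    | coe r =>
        rw [← EReal.coe_mul]
        exact_mod_cast mul_nonpos_of_nonneg_of_nonpos hc (by exact_mod_cast hb)
    | top => exact absurd hb (by simp)

/-- Theorem 4.1 (sufficient condition for an isolated local minimizer). -/
theorem isolated_local_min_sufficient
    {l m q : ℕ}
    {X : Set (EuclideanSpace ℝ (Fin l))}
    {f : EuclideanSpace ℝ (Fin l) → ℝ}
    {g : Fin m → EuclideanSpace ℝ (Fin l) → ℝ}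
    {hf : Fin q → EuclideanSpace ℝ (Fin l) → ℝ}
    {xbar : EuclideanSpace ℝ (Fin l)}
    {p : ℕ} (hp : p ≤ m)
    (Dg : Fin m → EuclideanSpace ℝ (Fin l) → EReal)
    (hfeas : xbar ∈ Sset X g hf)
    (hactive : ∀ i : Fin m, g i xbar = 0 ↔ (i : ℕ) < p)
    (hDg : ∀ i : Fin m, (i : ℕ) < p → ∀ u, HasHadamardDerivAt (g i) X xbar u (Dg i u))
    (hcond : ∃ γ > (0 : ℝ), ∃ lam : Fin (p + 1) → ℝ, (∀ i, 0 ≤ lam i) ∧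
      ∀ u : EuclideanSpace ℝ (Fin l), u ≠ 0 →
        (0 : EReal) < (lam 0 : EReal) * lowerHadamardDeriv (Fpen f hf xbar γ) X xbar u +
          ∑ i : Fin p, (lam i.succ : EReal) * Dg ⟨i.1, lt_of_lt_of_le i.2 hp⟩ u) :
    ∃ A > (0 : ℝ), ∃ ε > (0 : ℝ), ∀ x ∈ Sset X g hf, ‖x - xbar‖ ≤ ε →
      f xbar + A * ‖x - xbar‖ ≤ f x := by
  classical
  obtain ⟨γ, hγ, lam, hlam, hpos⟩ := hcond
  by_contra hcon
  push_neg at hcon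
  have hsel : ∀ k : ℕ, ∃ x ∈ Sset X g hf, ‖x - xbar‖ ≤ 1 / ((k : ℝ) + 1) ∧
      f x < f xbar + (1 / ((k : ℝ) + 1)) * ‖x - xbar‖ := by
    intro k
    have hk : (0 : ℝ) < 1 / ((k : ℝ) + 1) := by positivity
    obtain ⟨x, hx1, hx2, hx3⟩ := hcon _ hk _ hk
    exact ⟨x, hx1, hx2, hx3⟩
  choose x hxS hxε hxf using hsel
  set t : ℕ → ℝ := fun k => ‖x k - xbar‖ with htdef
  have ht0 : ∀ k, 0 < t k := by
    intro k
    have hne : x k ≠ xbar := by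
      intro he
      have := hxf k
      rw [he] at this
      simp at this
    exact norm_pos_iff.mpr (sub_ne_zero.mpr hne)
  set v : ℕ → EuclideanSpace ℝ (Fin l) := fun k => (t k)⁻¹ • (x k - xbar) with hvdef
  have hv1 : ∀ k, v k ∈ Metric.sphere (0 : EuclideanSpace ℝ (Fin l)) 1 := by
    intro k
    rw [mem_sphere_zero_iff_norm]
    rw [hvdef]
    simp only [norm_smul, Real.norm_eq_abs, abs_inv, abs_of_pos (ht0 k)]
    exact inv_mul_cancel₀ (ht0 k).ne'
  obtain ⟨u, humem, φ, hφ, hvu⟩ :=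
    (isCompact_sphere (0 : EuclideanSpace ℝ (Fin l)) 1).tendsto_subseq hv1
  have hu0 : u ≠ 0 := by
    intro h
    have := mem_sphere_zero_iff_norm.mp humem
    rw [h] at this
    simp at this
  have hxk : ∀ k, xbar + t k • v k = x k := by
    intro k
    rw [hvdef]
    simp only []
    rw [smul_smul, mul_inv_cancel₀ (ht0 k).ne', one_smul]
    abel
  have htzero : Filter.Tendsto (fun k => t (φ k)) Filter.atTop (nhds 0) := by
    apply squeeze_zero (fun k => (ht0 _).le) (g := fun k : ℕ => 1 / ((k : ℝ) + 1))
    · intro k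
      refine (hxε (φ k)).trans ?_
      apply one_div_le_one_div_of_le (by positivity)
      have h : ((k : ℝ)) ≤ ((φ k : ℕ) : ℝ) := Nat.cast_le.mpr hφ.le_apply
      linarith
    · exact tendsto_one_div_add_atTop_nhds_zero_nat
  have hSX : Sset X g hf ⊆ X := fun y hy => hy.1.1
  set seq : ℕ → ℝ × EuclideanSpace ℝ (Fin l) := fun k => (t (φ k), v (φ k)) with hseqdef
  have hseq : Filter.Tendsto seq Filter.atTop
      ((nhdsWithin (0 : ℝ) (Set.Ioi 0) ×ˢ nhds u) ⊓
        Filter.principal {p : ℝ × EuclideanSpace ℝ (Fin l) | xbar + p.1 • p.2 ∈ X}) := by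
    refine Filter.tendsto_inf.mpr ⟨Filter.Tendsto.prodMk ?_ hvu, Filter.tendsto_principal.mpr ?_⟩
    · exact tendsto_nhdsWithin_of_tendsto_nhds_of_eventually_within _ htzero
        (Filter.Eventually.of_forall fun k => ht0 _)
    · refine Filter.Eventually.of_forall fun k => ?_
      show xbar + t (φ k) • v (φ k) ∈ X
      rw [hxk]
      exact hSX (hxS _)
  -- the penalty function has nonpositive lower Hadamard derivative in direction u
  have hF : lowerHadamardDeriv (Fpen f hf xbar γ) X xbar u ≤ 0 := by
    have hbound : ∀ k : ℕ,
        (((Fpen f hf xbar γ (xbar + (seq k).1 • (seq k).2) - Fpen f hf xbar γ xbar) / (seq k).1 : ℝ) : EReal)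
          ≤ ((1 / ((k : ℝ) + 1) + (1 / 2) * t (φ k) : ℝ) : EReal) := by
      intro k
      rw [EReal.coe_le_coe_iff]
      show (Fpen f hf xbar γ (xbar + t (φ k) • v (φ k)) - Fpen f hf xbar γ xbar) / t (φ k) ≤ _
      rw [hxk]
      have hh1 : hsum hf (x (φ k)) = 0 := (hxS (φ k)).2
      have hh2 : hsum hf xbar = 0 := hfeas.2
      have hFx : Fpen f hf xbar γ (x (φ k)) = f (x (φ k)) + (1 / 2) * (t (φ k)) ^ 2 := by
        rw [Fpen, hh1]; ring_nf; rfl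
      have hFxbar : Fpen f hf xbar γ xbar = f xbar := by
        rw [Fpen, hh2]; simp
      rw [hFx, hFxbar, div_le_iff₀ (ht0 (φ k))]
      have h1 : (1 : ℝ) / ((φ k : ℝ) + 1) ≤ 1 / ((k : ℝ) + 1) := by
        apply one_div_le_one_div_of_le (by positivity)
        have h : ((k : ℝ)) ≤ ((φ k : ℕ) : ℝ) := Nat.cast_le.mpr hφ.le_apply
        linarith
      have h2 := hxf (φ k)
      have h3 := ht0 (φ k)
      nlinarith [h3.le, mul_le_mul_of_nonneg_right h1 h3.le]
    have hlim : Filter.Tendsto (fun k : ℕ => ((1 / ((k : ℝ) + 1) + (1 / 2) * t (φ k) : ℝ) : EReal))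
        Filter.atTop (nhds (0 : EReal)) := by
      have : Filter.Tendsto (fun k : ℕ => (1 / ((k : ℝ) + 1) + (1 / 2) * t (φ k))) Filter.atTop
          (nhds 0) := by
        have h1 := tendsto_one_div_add_atTop_nhds_zero_nat (𝕜 := ℝ)
        have h2 := htzero.const_mul (1 / 2 : ℝ)
        have := h1.add h2
        simpa using this
      rw [show (0 : EReal) = ((0 : ℝ) : EReal) from rfl]
      exact (EReal.tendsto_coe).mpr this
    calc lowerHadamardDeriv (Fpen f hf xbar γ) X xbar u
        ≤ Filter.liminf
            (fun p : ℝ × EuclideanSpace ℝ (Fin l) =>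
              (((Fpen f hf xbar γ (xbar + p.1 • p.2) - Fpen f hf xbar γ xbar) / p.1 : ℝ) : EReal))
            (Filter.map seq Filter.atTop) :=
          Filter.liminf_le_liminf_of_le hseq
      _ = Filter.liminf
            (fun k => (((Fpen f hf xbar γ (xbar + (seq k).1 • (seq k).2) - Fpen f hf xbar γ xbar)
              / (seq k).1 : ℝ) : EReal)) Filter.atTop := rfl
      _ ≤ Filter.liminf (fun k : ℕ => ((1 / ((k : ℝ) + 1) + (1 / 2) * t (φ k) : ℝ) : EReal))
            Filter.atTop := Filter.liminf_le_liminf (Filter.Eventually.of_forall hbound)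
      _ = 0 := hlim.liminf_eq
  -- each active constraint has nonpositive Hadamard derivative in direction u
  have hGle : ∀ i : Fin p, Dg ⟨i.1, lt_of_lt_of_le i.2 hp⟩ u ≤ 0 := by
    intro i
    set i' : Fin m := ⟨i.1, lt_of_lt_of_le i.2 hp⟩ with hi'def
    have hip : (i' : ℕ) < p := i.2
    have htend := (hDg i' hip u).comp hseq
    refine le_of_tendsto htend (Filter.Eventually.of_forall fun k => ?_)
    show (((g i' (xbar + (seq k).1 • (seq k).2) - g i' xbar) / (seq k).1 : ℝ) : EReal) ≤ 0
    rw [show ((0 : EReal) = ((0 : ℝ) : EReal)) from rfl, EReal.coe_le_coe_iff]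
    show (g i' (xbar + t (φ k) • v (φ k)) - g i' xbar) / t (φ k) ≤ 0
    rw [hxk, (hactive i').mpr hip, sub_zero]
    exact div_nonpos_of_nonpos_of_nonneg ((hxS (φ k)).1.2 i') (ht0 (φ k)).le
  -- contradiction with the positivity assumption
  have h1 := hpos u hu0
  have hterm0 : (lam 0 : EReal) * lowerHadamardDeriv (Fpen f hf xbar γ) X xbar u ≤ 0 :=
    coe_mul_nonpos_aux (hlam 0) hF
  have hsum0 : ∑ i : Fin p, (lam i.succ : EReal) * Dg ⟨i.1, lt_of_lt_of_le i.2 hp⟩ u ≤ 0 :=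
    Finset.sum_nonpos fun i _ => coe_mul_nonpos_aux (hlam i.succ) (hGle i)
  exact absurd h1 (not_lt.mpr (add_nonpos hterm0 hsum0))
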